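/- arXiv:2601.23229 — 5 statements merged into one kernel-verified Lean document; each statement's English description precedes it below -/
import Mathlib

section
/- Let k ≥ 1 and C ≥ 1 be integers, and set R = 2kC + 1. Let X = {x_1, ..., x_k} be real numbers, and let A(X,C) be the set of sums Σ a_j x_j with a_j ∈ ℤ, |a_j| ≤ C. Then any sequence 0 < z_1 < z_2 < ... < z_m of elements of A(X,C) satisfying z_{i+1} ≥ R·z_i for all i has length m ≤ 2k - 1. -/
attribute [local instance] Matrix.seminormedAddCommGroup

theorem stmt_2 (k C : ℕ) (hk : 1 ≤ k) (hC : 1 ≤ C)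
    (x : Fin k → ℝ)
    (A : Set ℝ)
    (hA : A = {z : ℝ | ∃ a : Fin k → ℤ, (∀ j, |a j| ≤ (C : ℤ)) ∧
      z = ∑ j, (a j : ℝ) * x j})
    (m : ℕ) (z : Fin m → ℝ)
    (hzA : ∀ i, z i ∈ A)
    (hzpos : ∀ i, 0 < z i)
    (hsep : ∀ i : ℕ, ∀ h : i + 1 < m,
      z ⟨i + 1, h⟩ ≥ (2 * k * C + 1 : ℝ) * z ⟨i, by omega⟩)
    (hmono : StrictMono z) :
    m ≤ 2 * k - 1 := by
  by_contra hcon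
  push_neg at hcon
  have h2k : 2 * k ≤ m := by omega
  -- coefficient vectors
  simp only [hA, Set.mem_setOf_eq] at hzA
  choose a ha hz using hzA
  -- the matrix of the first 2k coefficient vectors
  set M : Matrix (Fin k) (Fin (2 * k)) ℤ := fun j i => a (Fin.castLE h2k i) j with hM
  have hcard1 : Fintype.card (Fin k) < Fintype.card (Fin (2 * k)) := by
    simp [Fintype.card_fin]; omega
  have hcard2 : 0 < Fintype.card (Fin k) := by simp [Fintype.card_fin]; omega
  obtain ⟨t, ht0, htM, htnorm⟩ := Int.Matrix.exists_ne_zero_int_vec_norm_le M hcard1 hcard2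
  have hCpos : (1 : ℝ) ≤ (C : ℝ) := by exact_mod_cast hC
  have hMnorm : max 1 ‖M‖ ≤ (C : ℝ) := by
    apply max_le hCpos
    rw [Matrix.norm_le_iff (by positivity)]
    intro i j
    rw [Int.norm_eq_abs]
    exact_mod_cast ha (Fin.castLE h2k j) i
  have hexp : ((Fintype.card (Fin k) : ℝ) /
      ((Fintype.card (Fin (2 * k)) : ℝ) - (Fintype.card (Fin k) : ℝ))) = 1 := by
    have hk' : (0:ℝ) < (k:ℝ) := by exact_mod_cast hk
    simp only [Fintype.card_fin]
    push_cast
    rw [show (2*(k:ℝ) - k) = k by ring, div_self (ne_of_gt hk')]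
  rw [hexp, Real.rpow_one] at htnorm
  have htb : ∀ i, |(t i : ℝ)| ≤ 2 * k * C := by
    intro i
    have h1 : ‖t i‖ ≤ ‖t‖ := norm_le_pi_norm t i
    rw [Int.norm_eq_abs] at h1
    calc |(t i : ℝ)| ≤ ‖t‖ := h1
      _ ≤ (Fintype.card (Fin (2 * k)) : ℝ) * max 1 ‖M‖ := htnorm
      _ ≤ (2 * k : ℝ) * (C : ℝ) := by
          simp only [Fintype.card_fin]
          push_cast
          exact mul_le_mul_of_nonneg_left hMnorm (by positivity)
      _ = 2 * k * C := by push_cast; ring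
  -- the relation  ∑ t i * z i = 0
  have hsum : ∑ i : Fin (2 * k), (t i : ℝ) * z (Fin.castLE h2k i) = 0 := by
    calc ∑ i : Fin (2 * k), (t i : ℝ) * z (Fin.castLE h2k i)
        = ∑ i : Fin (2 * k), ∑ j : Fin k,
            (t i : ℝ) * ((a (Fin.castLE h2k i) j : ℝ) * x j) := by
          apply Finset.sum_congr rfl
          intro i _
          rw [hz (Fin.castLE h2k i), Finset.mul_sum]
      _ = ∑ j : Fin k, ∑ i : Fin (2 * k),
            (t i : ℝ) * ((M j i : ℝ) * x j) := Finset.sum_comm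
      _ = ∑ j : Fin k, ((∑ i : Fin (2 * k), (M j i * t i : ℤ) : ℤ) : ℝ) * x j := by
          apply Finset.sum_congr rfl
          intro j _
          push_cast
          rw [Finset.sum_mul]
          apply Finset.sum_congr rfl
          intro i _
          ring
      _ = 0 := by
          apply Finset.sum_eq_zero
          intro j _
          have h0 : M.mulVec t j = 0 := by rw [htM]; rfl
          have h0' : ∑ i : Fin (2 * k), M j i * t i = 0 := by
            simpa [Matrix.mulVec, dotProduct] using h0
          rw [h0']
          simp
  -- ℕ-indexed versions
  set g : ℕ → ℝ := fun i => if h : i < m then z ⟨i, h⟩ else 0 with hg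
  set c : ℕ → ℝ := fun i => if h : i < 2 * k then (t ⟨i, h⟩ : ℝ) else 0 with hc
  have hgnonneg : ∀ i, 0 ≤ g i := by
    intro i
    simp only [hg]
    split
    · exact (hzpos _).le
    · exact le_refl 0
  have hcb : ∀ i, |c i| ≤ 2 * k * C := by
    intro i
    simp only [hc]
    split
    · exact htb _
    · simp; positivity
  -- geometric growth claim
  have claim : ∀ p, p < m → (2 * k * C : ℝ) * ∑ i ∈ Finset.range p, g i < g p := by
    intro p
    induction p with
    | zero =>
        intro h0
        simp only [Finset.range_zero, Finset.sum_empty, mul_zero, hg, dif_pos h0]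
        exact hzpos _
    | succ p ih =>
        intro hp1
        have hp : p < m := by omega
        have ihp := ih hp
        have hsep' := hsep p hp1
        have hgp : g p = z ⟨p, hp⟩ := by simp only [hg, dif_pos hp]
        have hgp1 : g (p + 1) = z ⟨p + 1, hp1⟩ := by simp only [hg, dif_pos hp1]
        rw [Finset.sum_range_succ, mul_add]
        have : (2 * k * C : ℝ) * g p + g p ≤ g (p + 1) := by
          rw [hgp, hgp1]
          calc (2 * k * C : ℝ) * z ⟨p, hp⟩ + z ⟨p, hp⟩
              = (2 * ↑k * ↑C + 1) * z ⟨p, hp⟩ := by ring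
            _ ≤ z ⟨p + 1, hp1⟩ := hsep'
        linarith
  -- largest index with nonzero coefficient
  have hex : ∃ i ∈ Finset.range (2 * k), c i ≠ 0 := by
    have : ∃ i : Fin (2 * k), t i ≠ 0 := by
      by_contra hno
      push_neg at hno
      exact ht0 (funext hno)
    obtain ⟨i, hi⟩ := this
    refine ⟨i.val, Finset.mem_range.mpr i.isLt, ?_⟩
    simp only [hc, dif_pos i.isLt, Fin.eta]
    exact_mod_cast hi
  set F := (Finset.range (2 * k)).filter (fun i => c i ≠ 0) with hF
  have hFne : F.Nonempty := by
    obtain ⟨i, hi1, hi2⟩ := hex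
    exact ⟨i, Finset.mem_filter.mpr ⟨hi1, hi2⟩⟩
  set t₀ := F.max' hFne with ht₀
  have ht₀mem := F.max'_mem hFne
  rw [Finset.mem_filter, Finset.mem_range] at ht₀mem
  obtain ⟨ht₀lt, hct₀⟩ := ht₀mem
  have ht₀m : t₀ < m := lt_of_lt_of_le ht₀lt h2k
  -- rewrite the relation over ℕ
  have hsum' : ∑ i ∈ Finset.range (2 * k), c i * g i = 0 := by
    rw [← Fin.sum_univ_eq_sum_range (fun i => c i * g i) (2 * k), ← hsum]
    apply Finset.sum_congr rfl
    intro i _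
    have hi2 : (i : ℕ) < 2 * k := i.isLt
    have him : (i : ℕ) < m := lt_of_lt_of_le hi2 h2k
    simp only [hc, hg, dif_pos hi2, dif_pos him, Fin.eta]
    rfl
  have hsplit : ∑ i ∈ Finset.range (t₀ + 1), c i * g i = 0 := by
    rw [← hsum']
    apply Finset.sum_subset (Finset.range_subset_range.mpr (by omega))
    intro i hin hnot
    rw [Finset.mem_range] at hin
    rw [Finset.mem_range, not_lt] at hnot
    have hci : c i = 0 := by
      by_contra hne
      have : i ∈ F := Finset.mem_filter.mpr ⟨Finset.mem_range.mpr hin, hne⟩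
      have := Finset.le_max' F i this
      omega
    rw [hci, zero_mul]
  rw [Finset.sum_range_succ] at hsplit
  have hgt₀ : 0 < g t₀ := by
    simp only [hg, dif_pos ht₀m]
    exact hzpos _
  have h1 : |c t₀| * g t₀ = |∑ i ∈ Finset.range t₀, c i * g i| := by
    have : ∑ i ∈ Finset.range t₀, c i * g i = -(c t₀ * g t₀) := by linarith
    rw [this, abs_neg, abs_mul, abs_of_nonneg (hgnonneg t₀)]
  have h2 : |∑ i ∈ Finset.range t₀, c i * g i| ≤
      ∑ i ∈ Finset.range t₀, |c i| * g i := by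
    calc |∑ i ∈ Finset.range t₀, c i * g i|
        ≤ ∑ i ∈ Finset.range t₀, |c i * g i| := Finset.abs_sum_le_sum_abs _ _
      _ = ∑ i ∈ Finset.range t₀, |c i| * g i := by
          apply Finset.sum_congr rfl
          intro i _
          rw [abs_mul, abs_of_nonneg (hgnonneg i)]
  have h3 : ∑ i ∈ Finset.range t₀, |c i| * g i ≤
      (2 * k * C : ℝ) * ∑ i ∈ Finset.range t₀, g i := by
    rw [Finset.mul_sum]
    apply Finset.sum_le_sum
    intro i _
    exact mul_le_mul_of_nonneg_right (hcb i) (hgnonneg i)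
  have h4 := claim t₀ ht₀m
  have h5 : (1 : ℝ) ≤ |c t₀| := by
    simp only [hc, dif_pos ht₀lt, dif_pos (show t₀ < 2 * k from ht₀lt)] at hct₀ ⊢
    rw [← Int.cast_abs]
    have : t ⟨t₀, ht₀lt⟩ ≠ 0 := by exact_mod_cast hct₀
    exact_mod_cast Int.one_le_abs this
  have h6 : g t₀ ≤ |c t₀| * g t₀ := by
    nlinarith
  linarith
end

section
/- Let B be an M×N integer matrix with N > M > 0, and let H ≥ 1 be an upper bound for the absolute values of the entries of B. Then there exists a nonzero integer vector c ∈ ℤ^N with Bc = 0 and ‖c‖_∞ ≤ (N·H)^{M/(N-M)}. -/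
attribute [local instance] Matrix.seminormedAddCommGroup

theorem stmt_3 (M N : ℕ) (hM : 0 < M) (hMN : M < N)
    (B : Matrix (Fin M) (Fin N) ℤ) (H : ℝ) (hH : 1 ≤ H)
    (hB : ∀ i j, (|B i j| : ℝ) ≤ H) :
    ∃ c : Fin N → ℤ, c ≠ 0 ∧ B.mulVec c = 0 ∧
      ∀ j, (|c j| : ℝ) ≤ ((N : ℝ) * H) ^ ((M : ℝ) / ((N : ℝ) - (M : ℝ))) := by
  have hcardM : Fintype.card (Fin M) = M := Fintype.card_fin M
  have hcardN : Fintype.card (Fin N) = N := Fintype.card_fin N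
  obtain ⟨t, ht0, htB, htle⟩ := Int.Matrix.exists_ne_zero_int_vec_norm_le B
    (by rw [hcardM, hcardN]; exact hMN) (by rw [hcardM]; exact hM)
  refine ⟨t, ht0, htB, fun j => ?_⟩
  have hnormA : ‖B‖ ≤ H := by
    rw [Matrix.norm_le_iff (le_trans zero_le_one hH)]
    intro i j
    rw [Int.norm_eq_abs]
    exact_mod_cast hB i j
  have hmax : max 1 ‖B‖ ≤ H := max_le hH hnormA
  have htj : (|t j| : ℝ) ≤ ‖t‖ := by
    rw [← Int.norm_eq_abs]
    exact norm_le_pi_norm t j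
  rw [hcardM, hcardN] at htle
  refine le_trans (le_trans htj htle) ?_
  have hexp : (0:ℝ) ≤ (M:ℝ) / ((N:ℝ) - (M:ℝ)) := by
    apply div_nonneg (Nat.cast_nonneg M)
    have : (M:ℝ) < N := by exact_mod_cast hMN
    linarith
  apply Real.rpow_le_rpow (by positivity) ?_ hexp
  exact mul_le_mul_of_nonneg_left hmax (Nat.cast_nonneg N)
end

section
/- Let k ≥ 1 and C ≥ 1 be integers, let X be a set of k real numbers, and let A(X,C) be the set of integer linear combinations of elements of X with coefficients of absolute value at most C. Then the number of dyadic intervals [2^n, 2^{n+1}), n ≥ 0, that contain an element of A(X,C) ∩ [1, ∞) is at most (2k−1)·(⌊log₂(2kC+1)⌋ + 2). -/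
lemma sep_card (L : ℕ) (hL : 1 ≤ L) : ∀ (m : ℕ) (S : Finset ℕ),
    (∀ T ⊆ S, (∀ a ∈ T, ∀ b ∈ T, a < b → a + L ≤ b) → T.card ≤ m) →
    S.card ≤ m * L := by
  intro m
  induction m with
  | zero =>
    intro S h
    rcases S.eq_empty_or_nonempty with rfl | ⟨a, ha⟩
    · simp
    · have := h {a} (by simpa using ha) (by intro p hp q hq hpq; simp at hp hq; omega)
      simp at this
  | succ m ih =>
    intro S h
    rcases S.eq_empty_or_nonempty with rfl | hne
    · simp
    set a := S.min' hne with ha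
    set S₂ := S.filter (fun n => a + L ≤ n) with hS₂
    have hS₂card : S₂.card ≤ m * L := by
      apply ih
      intro T hT hTsep
      have haT : a ∉ T := by
        intro hmem
        have := hT hmem
        simp [hS₂] at this
        omega
      have hins := h (insert a T) ?_ ?_
      · rw [Finset.card_insert_of_notMem haT] at hins
        omega
      · intro p hp
        rcases Finset.mem_insert.mp hp with rfl | hp
        · exact S.min'_mem hne
        · exact (Finset.filter_subset _ _) (hT hp)
      · intro p hp q hq hpq
        rcases Finset.mem_insert.mp hp with rfl | hp <;>
          rcases Finset.mem_insert.mp hq with rfl | hq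
        · omega
        · have := hT hq; simp [hS₂] at this; omega
        · have hp' := hT hp
          simp [hS₂] at hp'
          omega
        · exact hTsep p hp q hq hpq
    have hrest : (S.filter (fun n => ¬ (a + L ≤ n))).card ≤ L := by
      have hsub : S.filter (fun n => ¬ (a + L ≤ n)) ⊆ Finset.Ico a (a + L) := by
        intro n hn
        simp only [Finset.mem_filter] at hn
        have := S.min'_le n hn.1
        simp only [Finset.mem_Ico]
        omega
      calc (S.filter (fun n => ¬ (a + L ≤ n))).card ≤ (Finset.Ico a (a + L)).card :=
            Finset.card_le_card hsub
        _ = L := by rw [Nat.card_Ico]; omega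
    have hsplit : S₂.card + (S.filter (fun n => ¬ (a + L ≤ n))).card = S.card := by
      simpa using Finset.card_filter_add_card_filter_not
        (s := S) (p := fun n => a + L ≤ n)
    rw [Nat.succ_mul]
    omega


attribute [local instance] Matrix.seminormedAddCommGroup

lemma gap_lemma {k C : ℕ} (hk : 1 ≤ k) (hC : 1 ≤ C) (x : Fin k → ℝ)
    {m : ℕ} (z : Fin m → ℝ)
    (h1 : ∀ i, 1 ≤ z i)
    (hmem : ∀ i, ∃ a : Fin k → ℤ, (∀ j, |a j| ≤ (C : ℤ)) ∧ z i = ∑ j, (a j : ℝ) * x j)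
    (hsep : ∀ i j : Fin m, (i : ℕ) < (j : ℕ) →
      (((2 * k * C : ℕ) : ℝ) + 1) * z i ≤ z j) :
    m ≤ 2 * k - 1 := by
  classical
  by_contra hcon
  push_neg at hcon
  have hmk : 2 * k ≤ m := by omega
  -- choose coefficients
  choose a ha1 ha2 using hmem
  set D : ℝ := ((2 * k * C : ℕ) : ℝ) with hD
  have hD1 : 1 ≤ D := by
    rw [hD]
    exact_mod_cast Nat.one_le_iff_ne_zero.mpr (by positivity)
  -- restrict to the first 2k entries
  set w : Fin (2 * k) → ℝ := fun i => z (Fin.castLE hmk i) with hw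
  have h1w : ∀ i, 1 ≤ w i := fun i => h1 _
  have hsepw : ∀ i j : Fin (2 * k), (i : ℕ) < (j : ℕ) → (D + 1) * w i ≤ w j := by
    intro i j hij
    exact hsep _ _ (by simpa using hij)
  set M : Matrix (Fin k) (Fin (2 * k)) ℤ :=
    Matrix.of (fun j i => a (Fin.castLE hmk i) j) with hM
  have hcards : Fintype.card (Fin k) < Fintype.card (Fin (2 * k)) := by
    simp [Fintype.card_fin]; omega
  have hpos : 0 < Fintype.card (Fin k) := by simp [Fintype.card_fin]; omega
  obtain ⟨t, ht0, htM, htn⟩ := Int.Matrix.exists_ne_zero_int_vec_norm_le M hcards hpos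
  -- norm bound on M
  have hMnorm : ‖M‖ ≤ (C : ℝ) := by
    rw [Matrix.norm_le_iff (by positivity)]
    intro i j
    rw [Int.norm_eq_abs]
    exact_mod_cast ha1 (Fin.castLE hmk j) i
  have hmax : max 1 ‖M‖ ≤ (C : ℝ) := by
    apply max_le _ hMnorm
    exact_mod_cast hC
  -- exponent is 1
  have hexp : ((Fintype.card (Fin k) : ℝ)) /
      ((Fintype.card (Fin (2 * k)) : ℝ) - (Fintype.card (Fin k) : ℝ)) = 1 := by
    simp only [Fintype.card_fin]
    have hk0 : (k : ℝ) ≠ 0 := by positivity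
    rw [div_eq_one_iff_eq]
    · push_cast; ring
    · push_cast
      have : (k:ℝ) ≥ 1 := by exact_mod_cast hk
      nlinarith
  have htnorm : ‖t‖ ≤ D := by
    calc ‖t‖ ≤ ((Fintype.card (Fin (2 * k)) : ℝ) * max 1 ‖M‖) ^
        (((Fintype.card (Fin k) : ℝ)) /
          ((Fintype.card (Fin (2 * k)) : ℝ) - (Fintype.card (Fin k) : ℝ))) := htn
      _ = (Fintype.card (Fin (2 * k)) : ℝ) * max 1 ‖M‖ := by
          rw [hexp, Real.rpow_one]
      _ ≤ D := by
          simp only [Fintype.card_fin]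
          rw [hD]
          push_cast
          have h0 : (0:ℝ) ≤ 2 * (k:ℝ) := by positivity
          calc 2 * (k:ℝ) * (1 ⊔ ‖M‖) ≤ 2 * (k:ℝ) * (C:ℝ) :=
                mul_le_mul_of_nonneg_left hmax h0
            _ = 2 * (k:ℝ) * (C:ℝ) := rfl
  have htabs : ∀ i, |((t i : ℤ) : ℝ)| ≤ D := by
    intro i
    calc |((t i : ℤ) : ℝ)| = ‖t i‖ := by rw [Int.norm_eq_abs]
      _ ≤ ‖t‖ := norm_le_pi_norm t i
      _ ≤ D := htnorm
  -- the linear relation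
  have hsum0 : ∑ i, ((t i : ℝ) * w i) = 0 := by
    have hrel : ∀ j : Fin k, (∑ i, M j i * t i) = 0 := by
      intro j
      have := congrFun htM j
      simpa [Matrix.mulVec, dotProduct] using this
    calc ∑ i, ((t i : ℝ) * w i)
        = ∑ i, ∑ j, (t i : ℝ) * ((M j i : ℝ) * x j) := by
          apply Finset.sum_congr rfl
          intro i _
          rw [hw]
          simp only
          rw [ha2 (Fin.castLE hmk i), Finset.mul_sum]
          apply Finset.sum_congr rfl
          intro j _
          simp [hM]
      _ = ∑ j, (((∑ i, M j i * t i : ℤ) : ℝ)) * x j := by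
          rw [Finset.sum_comm]
          apply Finset.sum_congr rfl
          intro j _
          push_cast
          rw [Finset.sum_mul]
          apply Finset.sum_congr rfl
          intro i _
          ring
      _ = 0 := by
          simp [hrel]
  -- the maximal nonzero index
  have hFne : (Finset.univ.filter (fun i : Fin (2 * k) => t i ≠ 0)).Nonempty := by
    obtain ⟨i, hi⟩ := Function.ne_iff.mp ht0
    exact ⟨i, Finset.mem_filter.mpr ⟨Finset.mem_univ i, by simpa using hi⟩⟩
  set i₀ := (Finset.univ.filter (fun i : Fin (2 * k) => t i ≠ 0)).max' hFne with hi₀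
  have hti₀ : t i₀ ≠ 0 := by
    have h := (Finset.univ.filter (fun i : Fin (2 * k) => t i ≠ 0)).max'_mem hFne
    exact (Finset.mem_filter.mp h).2
  have hzero : ∀ i : Fin (2 * k), i₀ < i → t i = 0 := by
    intro i hi
    by_contra hne
    have hmem : i ∈ Finset.univ.filter (fun i : Fin (2 * k) => t i ≠ 0) :=
      Finset.mem_filter.mpr ⟨Finset.mem_univ i, hne⟩
    exact absurd (Finset.le_max' _ i hmem) (not_le.mpr hi)
  -- split the sum at i₀
  have hsplit : (t i₀ : ℝ) * w i₀ +
      ∑ i ∈ Finset.univ.filter (fun i => i < i₀), (t i : ℝ) * w i = 0 := by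
    have hsub : Finset.univ.filter (fun i : Fin (2 * k) => i ≤ i₀) ⊆ Finset.univ :=
      Finset.filter_subset _ _
    have heq : ∑ i, ((t i : ℝ) * w i) =
        ∑ i ∈ Finset.univ.filter (fun i => i ≤ i₀), (t i : ℝ) * w i := by
      symm
      apply Finset.sum_subset hsub
      intro i _ hi
      have : i₀ < i := by
        simp only [Finset.mem_filter, Finset.mem_univ, true_and] at hi
        exact not_le.mp hi
      rw [hzero i this]
      simp
    have hins : Finset.univ.filter (fun i : Fin (2 * k) => i ≤ i₀) =
        insert i₀ (Finset.univ.filter (fun i => i < i₀)) := by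
      ext i
      simp only [Finset.mem_filter, Finset.mem_univ, true_and, Finset.mem_insert]
      constructor
      · intro h; rcases lt_or_eq_of_le h with h | h
        · exact Or.inr h
        · exact Or.inl h
      · rintro (rfl | h)
        · exact le_refl _
        · exact le_of_lt h
    rw [heq, hins, Finset.sum_insert (by simp)] at hsum0
    exact hsum0
  -- geometric bound
  have hgeo : ∀ N : ℕ, ∀ n : Fin (2 * k), (n : ℕ) ≤ N →
      D * ∑ i ∈ Finset.univ.filter (fun i => i < n), w i < w n := by
    intro N
    induction N with
    | zero =>
      intro n hn
      have hn0 : (n : ℕ) = 0 := Nat.le_zero.mp hn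
      have : Finset.univ.filter (fun i : Fin (2 * k) => i < n) = ∅ := by
        ext i
        simp only [Finset.mem_filter, Finset.mem_univ, true_and, Finset.notMem_empty,
          iff_false, Fin.lt_def, hn0]
        omega
      rw [this]
      simp only [Finset.sum_empty, mul_zero]
      linarith [h1w n]
    | succ N ih =>
      intro n hn
      by_cases hn' : (n : ℕ) ≤ N
      · exact ih n hn'
      have hv : (n : ℕ) = N + 1 := by omega
      have hNlt : N < 2 * k := by omega
      set p : Fin (2 * k) := ⟨N, hNlt⟩ with hp
      have hfilter : Finset.univ.filter (fun i : Fin (2 * k) => i < n) =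
          insert p (Finset.univ.filter (fun i => i < p)) := by
        ext i
        simp only [Finset.mem_filter, Finset.mem_univ, true_and, Finset.mem_insert,
          Fin.lt_def, hv, hp, Fin.ext_iff]
        omega
      rw [hfilter, Finset.sum_insert (by simp)]
      have hih := ih p (by simp [hp])
      have hpn : (D + 1) * w p ≤ w n := hsepw p n (by simp [hp, hv])
      have hwp : 0 < w p := lt_of_lt_of_le zero_lt_one (h1w p)
      nlinarith
  have hSpre := hgeo (i₀ : ℕ) i₀ (le_refl _)
  -- final contradiction
  have habs : |(t i₀ : ℝ) * w i₀| ≤ D * ∑ i ∈ Finset.univ.filter (fun i => i < i₀), w i := by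
    have : (t i₀ : ℝ) * w i₀ = -∑ i ∈ Finset.univ.filter (fun i => i < i₀), (t i : ℝ) * w i := by
      linarith
    rw [this, abs_neg]
    calc |∑ i ∈ Finset.univ.filter (fun i => i < i₀), (t i : ℝ) * w i|
        ≤ ∑ i ∈ Finset.univ.filter (fun i => i < i₀), |(t i : ℝ) * w i| :=
          Finset.abs_sum_le_sum_abs _ _
      _ ≤ ∑ i ∈ Finset.univ.filter (fun i => i < i₀), D * w i := by
          apply Finset.sum_le_sum
          intro i _
          rw [abs_mul, abs_of_nonneg (le_trans zero_le_one (h1w i))]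
          exact mul_le_mul_of_nonneg_right (htabs i) (le_trans zero_le_one (h1w i))
      _ = D * ∑ i ∈ Finset.univ.filter (fun i => i < i₀), w i := by
          rw [Finset.mul_sum]
  have hlow : w i₀ ≤ |(t i₀ : ℝ) * w i₀| := by
    rw [abs_mul, abs_of_nonneg (le_trans zero_le_one (h1w i₀))]
    have h1t : (1 : ℝ) ≤ |(t i₀ : ℝ)| := by
      have := Int.one_le_abs hti₀
      exact_mod_cast this
    nlinarith [h1w i₀]
  linarith

theorem stmt_5 (k C : ℕ) (hk : 1 ≤ k) (hC : 1 ≤ C)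
    (x : Fin k → ℝ)
    (A : Set ℝ)
    (hA : A = {z : ℝ | ∃ a : Fin k → ℤ, (∀ j, |a j| ≤ (C : ℤ)) ∧
      z = ∑ j, (a j : ℝ) * x j}) :
    ((Set.ncard {n : ℕ | ∃ z ∈ A, 1 ≤ z ∧
        z ∈ Set.Ico ((2:ℝ)^n) ((2:ℝ)^(n+1))} : ℤ))
      ≤ (2 * k - 1) * (⌊Real.logb 2 (2 * k * C + 1)⌋ + 2) := by
  classical
  set N : Set ℕ := {n : ℕ | ∃ z ∈ A, 1 ≤ z ∧
      z ∈ Set.Ico ((2:ℝ)^n) ((2:ℝ)^(n+1))} with hN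
  set Rn : ℕ := 2 * k * C + 1 with hRn
  have hR1 : (1 : ℝ) ≤ (Rn : ℝ) := by
    rw [hRn]; exact_mod_cast Nat.one_le_iff_ne_zero.mpr (by positivity)
  have hlog0 : 0 ≤ ⌊Real.logb 2 (Rn : ℝ)⌋ :=
    Int.floor_nonneg.mpr (Real.logb_nonneg one_lt_two hR1)
  set L : ℕ := (⌊Real.logb 2 (Rn : ℝ)⌋).toNat + 2 with hL
  -- R ≤ 2^(L-1)
  have hRpow : (Rn : ℝ) ≤ 2 ^ ((⌊Real.logb 2 (Rn : ℝ)⌋).toNat + 1) := by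
    calc (Rn : ℝ) = (2 : ℝ) ^ (Real.logb 2 (Rn : ℝ)) :=
          (Real.rpow_logb two_pos (by norm_num) (by linarith)).symm
      _ ≤ (2 : ℝ) ^ (((⌊Real.logb 2 (Rn : ℝ)⌋).toNat + 1 : ℕ) : ℝ) := by
          apply Real.rpow_le_rpow_of_exponent_le one_le_two
          have h1 := Int.lt_floor_add_one (Real.logb 2 (Rn : ℝ))
          have h2 : ((⌊Real.logb 2 (Rn : ℝ)⌋ : ℤ) : ℝ) ≤
              (((⌊Real.logb 2 (Rn : ℝ)⌋).toNat : ℤ) : ℝ) := by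
            exact_mod_cast Int.self_le_toNat _
          push_cast at h1 h2 ⊢
          linarith
      _ = 2 ^ ((⌊Real.logb 2 (Rn : ℝ)⌋).toNat + 1) :=
          Real.rpow_natCast 2 _
  -- choice of witnesses
  have hex : ∀ n : ℕ, ∃ z : ℝ, n ∈ N →
      (z ∈ A ∧ 1 ≤ z ∧ (2:ℝ)^n ≤ z ∧ z < (2:ℝ)^(n+1)) := by
    intro n
    by_cases h : n ∈ N
    · rw [hN] at h
      obtain ⟨z, hzA, hz1, hzIco⟩ := h
      exact ⟨z, fun _ => ⟨hzA, hz1, hzIco.1, hzIco.2⟩⟩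
    · exact ⟨0, fun hn => absurd hn h⟩
  choose f hf using hex
  -- A is finite
  have hAfin : A.Finite := by
    rw [hA]
    have hsub : {z : ℝ | ∃ a : Fin k → ℤ, (∀ j, |a j| ≤ (C : ℤ)) ∧
        z = ∑ j, (a j : ℝ) * x j} ⊆
        (fun a : Fin k → ℤ => ∑ j, (a j : ℝ) * x j) ''
          (Set.pi Set.univ (fun _ => Set.Icc (-(C : ℤ)) (C : ℤ))) := by
      intro z hz
      obtain ⟨a, ha, rfl⟩ := hz
      exact ⟨a, fun j _ => Set.mem_Icc.mpr (abs_le.mp (ha j)), rfl⟩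
    exact (((Set.Finite.pi (fun _ => Set.finite_Icc _ _)).image _).subset hsub)
  -- N is finite
  have hkey : ∀ p q : ℕ, p ∈ N → q ∈ N → p < q → f p ≠ f q := by
    intro p q hp hq hpq heq
    have h1 := (hf p hp).2.2.2
    have h2 := (hf q hq).2.2.1
    have h3 : (2:ℝ)^(p+1) ≤ (2:ℝ)^q := by
      apply pow_le_pow_right₀ one_le_two
      omega
    rw [heq] at h1
    linarith
  have hinj : Set.InjOn f N := by
    intro p hp q hq heq
    by_contra hne
    rcases lt_trichotomy p q with h | h | h
    · exact hkey p q hp hq h heq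
    · exact hne h
    · exact hkey q p hq hp h heq.symm
  have hNfin : N.Finite := by
    apply Set.Finite.of_finite_image _ hinj
    apply hAfin.subset
    rintro _ ⟨n, hn, rfl⟩
    exact (hf n hn).1
  set S : Finset ℕ := hNfin.toFinset with hS
  -- the separation bound
  have hcard : S.card ≤ (2 * k - 1) * L := by
    apply sep_card L (by omega) (2 * k - 1) S
    intro T hT hTsep
    have hTN : ∀ n ∈ T, n ∈ N := by
      intro n hn
      have := hT hn
      rwa [hS, Set.Finite.mem_toFinset] at this
    set e := T.orderIsoOfFin rfl with he
    set zz : Fin T.card → ℝ := fun i => f ((e i : ℕ)) with hzz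
    have hmemN : ∀ i : Fin T.card, ((e i : ℕ)) ∈ N := fun i => hTN _ (e i).2
    apply gap_lemma hk hC x zz
    · intro i
      exact (hf _ (hmemN i)).2.1
    · intro i
      have := (hf _ (hmemN i)).1
      rw [hA] at this
      exact this
    · intro i j hij
      have hlt : ((e i : ℕ)) < ((e j : ℕ)) := by
        have : e i < e j := e.strictMono (by exact hij)
        exact this
      have hgap : ((e i : ℕ)) + L ≤ ((e j : ℕ)) :=
        hTsep _ (e i).2 _ (e j).2 hlt
      have hfi := hf _ (hmemN i)
      have hfj := hf _ (hmemN j)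
      have h2R : (((2 * k * C : ℕ) : ℝ) + 1) = (Rn : ℝ) := by
        rw [hRn]; push_cast; ring
      rw [hzz]
      simp only
      rw [h2R]
      have hL1 : (⌊Real.logb 2 (Rn : ℝ)⌋).toNat + 1 + ((e i : ℕ) + 1) = (e i : ℕ) + L := by
        rw [hL]; ring
      calc (Rn : ℝ) * f ((e i : ℕ))
          ≤ 2 ^ ((⌊Real.logb 2 (Rn : ℝ)⌋).toNat + 1) * 2 ^ ((e i : ℕ) + 1) := by
            apply mul_le_mul hRpow (le_of_lt hfi.2.2.2) (by linarith [hfi.2.1]) (by positivity)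
        _ = 2 ^ ((e i : ℕ) + L) := by rw [← pow_add, hL1]
        _ ≤ 2 ^ ((e j : ℕ)) := pow_le_pow_right₀ one_le_two hgap
        _ ≤ f ((e j : ℕ)) := hfj.2.2.1
  -- put it together
  have hncard : N.ncard = S.card := Set.ncard_eq_toFinset_card N hNfin
  have harg : ((Rn : ℕ) : ℝ) = 2 * (k : ℝ) * (C : ℝ) + 1 := by
    rw [hRn]; push_cast; ring
  rw [hncard]
  calc (S.card : ℤ) ≤ (((2 * k - 1) * L : ℕ) : ℤ) := by exact_mod_cast hcard
    _ = (2 * (k : ℤ) - 1) * ((⌊Real.logb 2 (Rn : ℝ)⌋) + 2) := by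
        rw [hL]
        generalize hgen : ⌊Real.logb 2 (Rn : ℝ)⌋ = B at hlog0 ⊢
        push_cast [Int.toNat_of_nonneg hlog0, Nat.cast_sub (by omega : 1 ≤ 2 * k)]
        ring
    _ = (2 * (k : ℤ) - 1) * (⌊Real.logb 2 (2 * (k:ℝ) * (C:ℝ) + 1)⌋ + 2) := by
        rw [harg]
end

section
/- Let X be a finite set of nonnegative real numbers and let A(X) = {|Σ_{x∈X} g(x)·x| : g : X → {−1,0,1}} be the set of absolute values of unitary signed subset sums. Then the number of distinct values of ⌊log₂ y⌋ as y ranges over A(X) \ {0} is O(|X| log |X|). -/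
open Finset

private lemma gapLemma {C : ℕ} (f : Fin C → ℤ) (hf : StrictMono f) :
    ∀ (a : Fin C) (bv : ℕ) (hlt : bv < C), (a : ℕ) ≤ bv →
      ((bv : ℤ) - ((a : ℕ) : ℤ)) ≤ f ⟨bv, hlt⟩ - f a := by
  intro a bv
  induction bv with
  | zero =>
      intro hlt hab
      have h0 : (a : ℕ) = 0 := Nat.le_zero.mp hab
      have ha : a = ⟨0, hlt⟩ := Fin.ext h0
      rw [ha]
      simp
  | succ k ih =>
      intro hlt hab
      rcases Nat.lt_or_ge (a : ℕ) (k + 1) with h | h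
      · have hk : k < C := Nat.lt_of_succ_lt hlt
        have h1 := ih hk (Nat.lt_succ_iff.mp h)
        have hlt2 : (⟨k, hk⟩ : Fin C) < ⟨k + 1, hlt⟩ := by
          simp [Fin.lt_def]
        have h2 : f ⟨k, hk⟩ < f ⟨k + 1, hlt⟩ := hf hlt2
        push_cast at h1 ⊢
        omega
      · have h0 : (a : ℕ) = k + 1 := le_antisymm hab h
        have ha : a = ⟨k + 1, hlt⟩ := Fin.ext h0
        rw [ha]
        simp

private lemma windowLemma (w : ℝ) (hw : w ≠ 0) :
    (2:ℝ) ^ (⌊Real.logb 2 |w|⌋) ≤ |w| ∧ |w| < (2:ℝ) ^ (⌊Real.logb 2 |w|⌋ + 1) := by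
  have hpos : (0:ℝ) < |w| := abs_pos.mpr hw
  have hrw : (2:ℝ) ^ (Real.logb 2 |w|) = |w| :=
    Real.rpow_logb (by norm_num) (by norm_num) hpos
  constructor
  · calc (2:ℝ) ^ (⌊Real.logb 2 |w|⌋) = (2:ℝ) ^ ((⌊Real.logb 2 |w|⌋ : ℝ)) :=
        (Real.rpow_intCast 2 _).symm
    _ ≤ (2:ℝ) ^ (Real.logb 2 |w|) :=
        Real.rpow_le_rpow_of_exponent_le (by norm_num) (Int.floor_le _)
    _ = |w| := hrw
  · calc |w| = (2:ℝ) ^ (Real.logb 2 |w|) := hrw.symm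
    _ < (2:ℝ) ^ (((⌊Real.logb 2 |w|⌋ + 1 : ℤ) : ℝ)) := by
        apply Real.rpow_lt_rpow_of_exponent_lt (by norm_num)
        push_cast
        exact Int.lt_floor_add_one _
    _ = (2:ℝ) ^ (⌊Real.logb 2 |w|⌋ + 1) := Real.rpow_intCast 2 _

private lemma keyLemma (X : Finset ℝ) (F : Finset ℤ)
    (hF : ∀ m ∈ F, ∃ g : ℝ → ℤ,
      (∀ x, g x = -1 ∨ g x = 0 ∨ g x = 1) ∧
      |∑ x ∈ X, (g x : ℝ) * x| ≠ 0 ∧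
      ⌊Real.logb 2 |∑ x ∈ X, (g x : ℝ) * x|⌋ = m) :
    F.card ≤ 2 * X.card * (Nat.clog 2 (64 * X.card ^ 2) + 1) := by
  classical
  by_contra hcon
  push_neg at hcon
  obtain ⟨n, hn⟩ : ∃ n, X.card = n := ⟨_, rfl⟩
  rw [hn] at hcon
  obtain ⟨t, ht⟩ : ∃ t, Nat.clog 2 (64 * n ^ 2) = t := ⟨_, rfl⟩
  rw [ht] at hcon
  obtain ⟨s, hs⟩ : ∃ s, s = t + 1 := ⟨_, rfl⟩
  obtain ⟨K, hK⟩ : ∃ K, K = 2 * n := ⟨_, rfl⟩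
  obtain ⟨T, hT⟩ : ∃ T, T = 4 * n := ⟨_, rfl⟩
  obtain ⟨KT, hKT⟩ : ∃ KT, KT = K * T := ⟨_, rfl⟩
  have hcon' : K * s < F.card := by rw [hK, hs]; exact hcon
  have hFne : F.Nonempty := card_pos.mp (by omega)
  have hn1 : 1 ≤ n := by
    obtain ⟨m, hm⟩ := hFne
    obtain ⟨g, hg1, hg2, hg3⟩ := hF m hm
    rcases Finset.eq_empty_or_nonempty X with h | h
    · rw [h] at hg2; simp at hg2
    · rw [← hn]; exact Finset.card_pos.mpr h
  have hs1 : 1 ≤ s := by omega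
  -- selection of K elements of F with pairwise gaps ≥ s
  have hsel : ∀ j : Fin K, (j : ℕ) * s < F.card := by
    intro j
    have h1 : (j : ℕ) * s ≤ K * s := Nat.mul_le_mul_right s (le_of_lt j.isLt)
    omega
  obtain ⟨o⟩ : Nonempty (Fin F.card ≃o {x // x ∈ F}) := ⟨F.orderIsoOfFin rfl⟩
  obtain ⟨φ, hφ⟩ : ∃ φ : Fin K → ℤ, φ = fun (j : Fin K) => ((o ⟨(j : ℕ) * s, hsel j⟩ : {x // x ∈ F}) : ℤ) := ⟨_, rfl⟩
  have hφmem : ∀ j, φ j ∈ F := by intro j; rw [hφ]; exact (o _).2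
  have hφgap : ∀ i j : Fin K, i < j → φ i + s ≤ φ j := by
    intro i j hij
    have hmono : StrictMono (fun k : Fin F.card => ((o k : ℤ))) := by
      intro a b hab
      exact_mod_cast o.strictMono hab
    have hg := gapLemma _ hmono ⟨(i : ℕ) * s, hsel i⟩ ((j : ℕ) * s) (hsel j)
      (Nat.mul_le_mul_right s (le_of_lt hij))
    have hg' : ((j : ℕ) * s : ℤ) - ((i : ℕ) * s : ℤ) ≤ φ j - φ i := by
      rw [hφ]
      simpa using hg
    have hji : (i : ℕ) + 1 ≤ (j : ℕ) := hij
    have hstep : (i : ℕ) * s + s ≤ (j : ℕ) * s := by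
      calc (i : ℕ) * s + s = ((i : ℕ) + 1) * s := by ring
      _ ≤ (j : ℕ) * s := Nat.mul_le_mul_right s hji
    have hstep' : ((i : ℕ) * s : ℤ) + (s : ℤ) ≤ ((j : ℕ) * s : ℤ) := by
      exact_mod_cast hstep
    push_cast at hg' hstep'
    linarith
  -- witnesses
  have hwex : ∀ j : Fin K, ∃ g : ℝ → ℤ, (∀ x, g x = -1 ∨ g x = 0 ∨ g x = 1) ∧
      |∑ x ∈ X, (g x : ℝ) * x| ≠ 0 ∧ ⌊Real.logb 2 |∑ x ∈ X, (g x : ℝ) * x|⌋ = φ j :=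
    fun j => hF _ (hφmem j)
  choose g hg1 hg2 hg3 using hwex
  obtain ⟨w, hwdef⟩ : ∃ w : Fin K → ℝ, w = fun j => ∑ x ∈ X, (g j x : ℝ) * x := ⟨_, rfl⟩
  have hg2' : ∀ j, |w j| ≠ 0 := by intro j; rw [hwdef]; exact hg2 j
  have hne : ∀ j, w j ≠ 0 := by
    intro j h
    exact hg2' j (by rw [h]; simp)
  have hflo : ∀ j, (2:ℝ) ^ (φ j) ≤ |w j| := by
    intro j
    have h1 := (windowLemma (w j) (hne j)).1
    rw [hwdef] at h1 ⊢
    rw [hg3 j] at h1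
    exact h1
  have hfhi : ∀ j, |w j| < (2:ℝ) ^ (φ j + 1) := by
    intro j
    have h1 := (windowLemma (w j) (hne j)).2
    rw [hwdef] at h1 ⊢
    rw [hg3 j] at h1
    exact h1
  -- pigeonhole
  obtain ⟨Ψ, hΨ⟩ : ∃ Ψ : (Fin K → ℕ) → (↥X → ℤ),
      Ψ = fun (lam : Fin K → ℕ) (x : ↥X) => ∑ j : Fin K, (lam j : ℤ) * g j (x : ℝ) := ⟨_, rfl⟩
  have hmaps : ∀ lam ∈ Fintype.piFinset (fun _ : Fin K => Finset.range (T + 1)),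
      Ψ lam ∈ Fintype.piFinset (fun _ : ↥X => Finset.Icc (-(KT : ℤ)) (KT : ℤ)) := by
    intro lam hlam
    rw [Fintype.mem_piFinset] at hlam ⊢
    intro x
    rw [Finset.mem_Icc]
    have hbound : |Ψ lam x| ≤ (KT : ℤ) := by
      rw [hΨ]
      calc |∑ j : Fin K, (lam j : ℤ) * g j (x : ℝ)|
          ≤ ∑ j : Fin K, |(lam j : ℤ) * g j (x : ℝ)| := Finset.abs_sum_le_sum_abs _ _
      _ ≤ ∑ _j : Fin K, (T : ℤ) := by
          apply Finset.sum_le_sum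
          intro j _
          rw [abs_mul]
          have hb := hlam j
          rw [Finset.mem_range] at hb
          have h1 : |(lam j : ℤ)| ≤ (T : ℤ) := by
            rw [abs_of_nonneg (by positivity)]
            exact_mod_cast Nat.lt_succ_iff.mp hb
          have h2 : |g j (x : ℝ)| ≤ 1 := by
            rcases hg1 j (x : ℝ) with h | h | h <;> simp [h]
          calc |(lam j : ℤ)| * |g j (x : ℝ)| ≤ (T : ℤ) * 1 :=
            mul_le_mul h1 h2 (abs_nonneg _) (by positivity)
          _ = (T : ℤ) := mul_one _
      _ = (KT : ℤ) := by
          rw [Finset.sum_const, Finset.card_univ, Fintype.card_fin, hKT]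
          push_cast
          ring
    have := abs_le.mp hbound
    exact ⟨this.1, this.2⟩
  have hcard : (Fintype.piFinset (fun _ : ↥X => Finset.Icc (-(KT : ℤ)) (KT : ℤ))).card
      < (Fintype.piFinset (fun _ : Fin K => Finset.range (T + 1))).card := by
    rw [Fintype.card_piFinset, Fintype.card_piFinset]
    rw [Finset.prod_const, Finset.prod_const]
    rw [Finset.card_univ, Finset.card_univ, Fintype.card_fin, Fintype.card_coe]
    rw [Finset.card_range, Int.card_Icc, hn]
    have hIcc : ((KT : ℤ) + 1 - -(KT : ℤ)).toNat = 2 * KT + 1 := by omega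
    rw [hIcc]
    have h1 : 2 * KT + 1 < (T + 1) ^ 2 := by nlinarith
    calc (2 * KT + 1) ^ n < ((T + 1) ^ 2) ^ n := Nat.pow_lt_pow_left h1 (by omega)
    _ = (T + 1) ^ K := by rw [← pow_mul, hK]
  obtain ⟨lam1, h1mem, lam2, h2mem, hneq, heq⟩ :=
    Finset.exists_ne_map_eq_of_card_lt_of_maps_to hcard hmaps
  obtain ⟨μ, hμ⟩ : ∃ μ : Fin K → ℤ, μ = fun j => (lam1 j : ℤ) - (lam2 j : ℤ) := ⟨_, rfl⟩
  have hμne : ∃ j, μ j ≠ 0 := by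
    by_contra hall
    push_neg at hall
    apply hneq
    funext j
    have := hall j
    rw [hμ] at this
    simp only [sub_eq_zero] at this
    exact_mod_cast this
  have hμbound : ∀ j, |μ j| ≤ (T : ℤ) := by
    intro j
    have b1 := (Fintype.mem_piFinset.mp h1mem) j
    have b2 := (Fintype.mem_piFinset.mp h2mem) j
    rw [Finset.mem_range] at b1 b2
    rw [hμ]
    simp only
    rw [abs_le]
    constructor <;> push_cast <;> omega
  have hμg : ∀ x ∈ X, (∑ j : Fin K, μ j * g j x) = 0 := by
    intro x hx
    have hfe := congrFun heq ⟨x, hx⟩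
    rw [hΨ] at hfe
    simp only at hfe
    rw [hμ]
    simp only [sub_mul]
    rw [Finset.sum_sub_distrib]
    rw [hfe]
    ring
  have hlin : ∑ j : Fin K, (μ j : ℝ) * w j = 0 := by
    rw [hwdef]
    simp only
    calc ∑ j : Fin K, (μ j : ℝ) * ∑ x ∈ X, (g j x : ℝ) * x
        = ∑ j : Fin K, ∑ x ∈ X, (μ j : ℝ) * ((g j x : ℝ) * x) := by
          apply Finset.sum_congr rfl
          intro j _
          rw [Finset.mul_sum]
    _ = ∑ x ∈ X, ∑ j : Fin K, (μ j : ℝ) * ((g j x : ℝ) * x) := Finset.sum_comm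
    _ = ∑ x ∈ X, ((∑ j : Fin K, (μ j : ℝ) * (g j x : ℝ)) * x) := by
          apply Finset.sum_congr rfl
          intro x _
          rw [Finset.sum_mul]
          apply Finset.sum_congr rfl
          intro j _
          ring
    _ = 0 := by
          apply Finset.sum_eq_zero
          intro x hx
          have hz : (∑ j : Fin K, (μ j : ℝ) * (g j x : ℝ)) = 0 := by
            have h0 := hμg x hx
            calc ∑ j : Fin K, (μ j : ℝ) * (g j x : ℝ)
                = ((∑ j : Fin K, μ j * g j x : ℤ) : ℝ) := by push_cast; ring_nf
            _ = 0 := by rw [h0]; simp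
          rw [hz, zero_mul]
  -- largest index with μ ≠ 0
  have hFjne : (Finset.univ.filter (fun j => μ j ≠ 0)).Nonempty := by
    obtain ⟨j, hj⟩ := hμne
    exact ⟨j, by simp [hj]⟩
  obtain ⟨j₀, hj₀⟩ : ∃ j₀, j₀ = (Finset.univ.filter (fun j => μ j ≠ 0)).max' hFjne := ⟨_, rfl⟩
  have hj₀ne : μ j₀ ≠ 0 := by
    have h1 := (Finset.univ.filter (fun j => μ j ≠ 0)).max'_mem hFjne
    rw [Finset.mem_filter] at h1
    rw [hj₀]
    exact h1.2
  have hmaxzero : ∀ j, j₀ < j → μ j = 0 := by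
    intro j hj
    by_contra h
    have hmem : j ∈ Finset.univ.filter (fun j => μ j ≠ 0) := by simp [h]
    have := (Finset.univ.filter (fun j => μ j ≠ 0)).le_max' j hmem
    rw [← hj₀] at this
    exact absurd hj (not_lt.mpr this)
  have hsplit : (μ j₀ : ℝ) * w j₀ = -∑ j ∈ Finset.univ.filter (fun j => j < j₀),
      (μ j : ℝ) * w j := by
    have h0 := hlin
    rw [← Finset.sum_filter_add_sum_filter_not Finset.univ (fun j => j < j₀)] at h0
    have hsingle : ∑ j ∈ Finset.univ.filter (fun j => ¬ j < j₀), (μ j : ℝ) * w j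
        = (μ j₀ : ℝ) * w j₀ := by
      apply Finset.sum_eq_single_of_mem j₀ (by simp)
      intro b hb hbne
      rw [Finset.mem_filter] at hb
      have hble : j₀ ≤ b := not_lt.mp hb.2
      have hzz : μ b = 0 := hmaxzero b (lt_of_le_of_ne hble (Ne.symm hbne))
      rw [hzz]
      simp
    rw [hsingle] at h0
    linarith
  -- final estimate
  have hTposR : (0:ℝ) < (T:ℝ) := by
    have h0 : 0 < T := by omega
    exact_mod_cast h0
  have habs : |w j₀| ≤ (KT : ℝ) * (2:ℝ) ^ (φ j₀ + 1 - (s:ℤ)) := by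
    have h1 : (1:ℝ) ≤ |(μ j₀ : ℝ)| := by
      have h0 : (1:ℤ) ≤ |μ j₀| := Int.one_le_abs hj₀ne
      calc (1:ℝ) = ((1:ℤ):ℝ) := by norm_num
      _ ≤ ((|μ j₀| : ℤ) : ℝ) := by exact_mod_cast h0
      _ = |(μ j₀ : ℝ)| := by push_cast; rfl
    calc |w j₀| = 1 * |w j₀| := (one_mul _).symm
    _ ≤ |(μ j₀ : ℝ)| * |w j₀| := mul_le_mul_of_nonneg_right h1 (abs_nonneg _)
    _ = |(μ j₀ : ℝ) * w j₀| := (abs_mul _ _).symm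
    _ = |∑ j ∈ Finset.univ.filter (fun j => j < j₀), (μ j : ℝ) * w j| := by
        rw [hsplit, abs_neg]
    _ ≤ ∑ j ∈ Finset.univ.filter (fun j => j < j₀), |(μ j : ℝ) * w j| :=
        Finset.abs_sum_le_sum_abs _ _
    _ ≤ ∑ _j ∈ Finset.univ.filter (fun j => j < j₀), (T:ℝ) * (2:ℝ) ^ (φ j₀ + 1 - (s:ℤ)) := by
        apply Finset.sum_le_sum
        intro j hj
        rw [Finset.mem_filter] at hj
        rw [abs_mul]
        have hμj : |(μ j : ℝ)| ≤ (T:ℝ) := by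
          have h0 := hμbound j
          calc |(μ j : ℝ)| = ((|μ j| : ℤ) : ℝ) := by push_cast; rfl
          _ ≤ ((T:ℤ):ℝ) := by exact_mod_cast h0
          _ = (T:ℝ) := by push_cast; rfl
        have hexp : φ j + 1 ≤ φ j₀ + 1 - (s:ℤ) := by
          have := hφgap j j₀ hj.2
          omega
        have hwj : |w j| ≤ (2:ℝ) ^ (φ j₀ + 1 - (s:ℤ)) := by
          have h2 := hfhi j
          have h3 : (2:ℝ) ^ (φ j + 1) ≤ (2:ℝ) ^ (φ j₀ + 1 - (s:ℤ)) :=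
            zpow_le_zpow_right₀ (by norm_num) hexp
          linarith
        exact mul_le_mul hμj hwj (abs_nonneg _) (le_of_lt hTposR)
    _ ≤ (KT:ℝ) * (2:ℝ) ^ (φ j₀ + 1 - (s:ℤ)) := by
        rw [Finset.sum_const, nsmul_eq_mul]
        have hc : ((Finset.univ.filter (fun j : Fin K => j < j₀)).card : ℝ) ≤ (K:ℝ) := by
          have h4 := Finset.card_filter_le (Finset.univ : Finset (Fin K)) (fun j => j < j₀)
          rw [Finset.card_univ, Fintype.card_fin] at h4
          exact_mod_cast h4
        have h5 : (0:ℝ) ≤ (T:ℝ) * (2:ℝ) ^ (φ j₀ + 1 - (s:ℤ)) := by positivity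
        calc ((Finset.univ.filter (fun j : Fin K => j < j₀)).card : ℝ)
              * ((T:ℝ) * (2:ℝ) ^ (φ j₀ + 1 - (s:ℤ)))
            ≤ (K:ℝ) * ((T:ℝ) * (2:ℝ) ^ (φ j₀ + 1 - (s:ℤ))) :=
              mul_le_mul_of_nonneg_right hc h5
        _ = (KT:ℝ) * (2:ℝ) ^ (φ j₀ + 1 - (s:ℤ)) := by
              rw [hKT]; push_cast; ring
  have hpos : (0:ℝ) < |w j₀| := abs_pos.mpr (hne j₀)
  have hfinal : (2:ℝ) ^ ((s:ℤ) - 1) ≤ (KT:ℝ) := by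
    have hlow := hflo j₀
    have hsplitexp : φ j₀ + 1 - (s:ℤ) = (1 - (s:ℤ)) + φ j₀ := by ring
    have h5 : |w j₀| ≤ (KT:ℝ) * (2:ℝ) ^ (1 - (s:ℤ)) * |w j₀| := by
      calc |w j₀| ≤ (KT:ℝ) * (2:ℝ) ^ (φ j₀ + 1 - (s:ℤ)) := habs
      _ = (KT:ℝ) * (2:ℝ) ^ (1 - (s:ℤ)) * (2:ℝ) ^ (φ j₀) := by
          rw [hsplitexp, zpow_add₀ (by norm_num : (2:ℝ) ≠ 0)]
          ring
      _ ≤ (KT:ℝ) * (2:ℝ) ^ (1 - (s:ℤ)) * |w j₀| := by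
          apply mul_le_mul_of_nonneg_left hlow
          have hKTpos : (0:ℝ) ≤ (KT:ℝ) := by positivity
          positivity
    have h6 : (1:ℝ) ≤ (KT:ℝ) * (2:ℝ) ^ (1 - (s:ℤ)) := by nlinarith
    calc (2:ℝ) ^ ((s:ℤ) - 1) = 1 * (2:ℝ) ^ ((s:ℤ) - 1) := (one_mul _).symm
    _ ≤ ((KT:ℝ) * (2:ℝ) ^ (1 - (s:ℤ))) * (2:ℝ) ^ ((s:ℤ) - 1) :=
        mul_le_mul_of_nonneg_right h6 (by positivity)
    _ = (KT:ℝ) := by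
        rw [mul_assoc, ← zpow_add₀ (by norm_num : (2:ℝ) ≠ 0)]
        norm_num
  have hclog : (64 * n ^ 2 : ℕ) ≤ 2 ^ t := by
    rw [← ht]
    exact Nat.le_pow_clog (by norm_num) _
  have h2t : (2:ℝ) ^ ((s:ℤ) - 1) = ((2 ^ t : ℕ) : ℝ) := by
    have he : (s:ℤ) - 1 = (t:ℤ) := by omega
    rw [he]
    push_cast
    norm_num
  have hchain : (64 * (n:ℝ) ^ 2) ≤ (KT:ℝ) := by
    have h7 : ((64 * n ^ 2 : ℕ) : ℝ) ≤ ((2 ^ t : ℕ) : ℝ) := by exact_mod_cast hclog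
    rw [← h2t] at h7
    have h8 : ((64 * n ^ 2 : ℕ) : ℝ) = 64 * (n:ℝ) ^ 2 := by push_cast; ring
    rw [h8] at h7
    linarith [hfinal]
  have hKT8 : (KT:ℝ) = 8 * (n:ℝ) ^ 2 := by rw [hKT, hK, hT]; push_cast; ring
  have hnR : (1:ℝ) ≤ (n:ℝ) := by exact_mod_cast hn1
  nlinarith

private lemma numericLemma (n : ℕ) :
    ((2 * n * (Nat.clog 2 (64 * n ^ 2) + 1) : ℕ) : ℝ) ≤ 1000 * ((n : ℝ) * Real.log n + 1) := by
  rcases Nat.eq_zero_or_pos n with h | h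
  · subst h; norm_num
  have hn1 : (1:ℝ) ≤ (n:ℝ) := by exact_mod_cast h
  have hln : 0 ≤ Real.log n := Real.log_nonneg hn1
  have l2 : (0.6931471803 : ℝ) < Real.log 2 := Real.log_two_gt_d9
  have l2' : Real.log 2 < 0.6931471808 := Real.log_two_lt_d9
  set t := Nat.clog 2 (64 * n ^ 2) with ht
  have htb : (t : ℝ) ≤ 7 + 3 * Real.log n := by
    rcases Nat.eq_zero_or_pos t with h0 | h0
    · rw [h0]; push_cast; linarith
    · have h1 : 1 < 64 * n ^ 2 := by nlinarith
      have h2 : 2 ^ (t - 1) < 64 * n ^ 2 := by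
        rw [ht]
        exact Nat.pow_pred_clog_lt_self (by norm_num) h1
      have h3 : ((2:ℝ)) ^ (t - 1) < 64 * (n:ℝ) ^ 2 := by
        have := h2
        exact_mod_cast this
      have h4 : Real.log ((2:ℝ) ^ (t - 1)) < Real.log (64 * (n:ℝ) ^ 2) :=
        Real.log_lt_log (by positivity) h3
      rw [Real.log_pow] at h4
      have h5 : Real.log (64 * (n:ℝ) ^ 2) = Real.log 64 + 2 * Real.log n := by
        rw [Real.log_mul (by norm_num) (by positivity), Real.log_pow]
        push_cast
        ring
      have h6 : Real.log (64:ℝ) = 6 * Real.log 2 := by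
        rw [show (64:ℝ) = 2 ^ 6 by norm_num, Real.log_pow]
        push_cast; ring
      rw [h5, h6] at h4
      have h7 : ((t - 1 : ℕ) : ℝ) = (t:ℝ) - 1 := by
        have : 1 ≤ t := h0
        push_cast [this]
        ring
      rw [h7] at h4
      -- ((t:ℝ) - 1) * log 2 < 6 log 2 + 2 log n
      -- want t ≤ 7 + 3 log n
      nlinarith [mul_nonneg hln (le_of_lt (lt_trans (by norm_num) l2))]
  have hLHS : ((2 * n * (t + 1) : ℕ) : ℝ) = 2 * (n:ℝ) * ((t:ℝ) + 1) := by push_cast; ring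
  rw [hLHS]
  have hb : 2 * (n:ℝ) * ((t:ℝ) + 1) ≤ 2 * (n:ℝ) * (8 + 3 * Real.log n) := by
    apply mul_le_mul_of_nonneg_left (by linarith) (by positivity)
  have hgoal : 2 * (n:ℝ) * (8 + 3 * Real.log n) ≤ 1000 * ((n:ℝ) * Real.log n + 1) := by
    rcases le_or_gt ((n:ℝ)) 1 with hn' | hn'
    · have hn'' : (n:ℝ) = 1 := le_antisymm hn' hn1
      rw [hn'']
      simp [Real.log_one]
      norm_num
    · have hn2 : (2:ℝ) ≤ (n:ℝ) := by
        have : 2 ≤ n := by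
          by_contra hc
          push_neg at hc
          interval_cases n <;> simp_all <;> linarith
        exact_mod_cast this
      have hlog2 : Real.log 2 ≤ Real.log n := Real.log_le_log (by norm_num) hn2
      nlinarith
  linarith

theorem stmt_6 :
    ∃ c : ℝ, 0 < c ∧ ∀ (X : Finset ℝ), (∀ x ∈ X, 0 ≤ x) →
      (Set.ncard {m : ℤ | ∃ g : ℝ → ℤ,
          (∀ x, g x = -1 ∨ g x = 0 ∨ g x = 1) ∧
          |∑ x ∈ X, (g x : ℝ) * x| ≠ 0 ∧
          ⌊Real.logb 2 |∑ x ∈ X, (g x : ℝ) * x|⌋ = m} : ℝ)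
        ≤ c * ((X.card : ℝ) * Real.log (X.card) + 1) := by
  refine ⟨1000, by norm_num, ?_⟩
  intro X _
  set M := {m : ℤ | ∃ g : ℝ → ℤ,
      (∀ x, g x = -1 ∨ g x = 0 ∨ g x = 1) ∧
      |∑ x ∈ X, (g x : ℝ) * x| ≠ 0 ∧
      ⌊Real.logb 2 |∑ x ∈ X, (g x : ℝ) * x|⌋ = m} with hM
  have hnonneg : (0:ℝ) ≤ 1000 * ((X.card : ℝ) * Real.log X.card + 1) := by
    have h0 : (0:ℝ) ≤ (X.card : ℝ) * Real.log X.card := by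
      rcases Nat.eq_zero_or_pos X.card with h | h
      · simp [h]
      · exact mul_nonneg (by positivity) (Real.log_nonneg (by exact_mod_cast h))
    linarith
  by_cases hfin : M.Finite
  · have h1 : hfin.toFinset.card ≤ 2 * X.card * (Nat.clog 2 (64 * X.card ^ 2) + 1) := by
      apply keyLemma X
      intro m hm
      have : m ∈ M := hfin.mem_toFinset.mp hm
      rw [hM] at this
      exact this
    have h2 : M.ncard = hfin.toFinset.card := by
      rw [← Set.ncard_coe_finset, hfin.coe_toFinset]
    rw [h2]
    calc (hfin.toFinset.card : ℝ)
        ≤ ((2 * X.card * (Nat.clog 2 (64 * X.card ^ 2) + 1) : ℕ) : ℝ) := by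
          exact_mod_cast h1
    _ ≤ 1000 * ((X.card : ℝ) * Real.log X.card + 1) := numericLemma X.card
  · rw [Set.Infinite.ncard hfin]
    simpa using hnonneg
end

section
/- Let v ∈ ℝ^S with states sorted so that v(s_1) ≥ v(s_2) ≥ ... ≥ v(s_n), let p̂ ∈ Δ(S) and δ ≥ 0 define the uncertainty set P = {p ∈ Δ(S) : ‖p − p̂‖_∞ ≤ δ}. Then there exists a maximizer p* of p·v over P such that every coordinate of p* equals either p̂(s)+δ, p̂(s)−δ, or 0 (with p̂(s) ≤ δ in the last case), with at most one exceptional coordinate taking an intermediate value strictly between p̂(s)−δ and p̂(s)+δ determined by the constraint that coordinates sum to 1. -/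
theorem stmt_19 (n : ℕ) (v : Fin n → ℝ)
    (hsorted : ∀ i j : Fin n, i ≤ j → v j ≤ v i)
    (phat : Fin n → ℝ) (hphat : phat ∈ stdSimplex ℝ (Fin n))
    (δ : ℝ) (hδ : 0 ≤ δ)
    (P : Set (Fin n → ℝ))
    (hP : P = {p ∈ stdSimplex ℝ (Fin n) | ∀ s, |p s - phat s| ≤ δ}) :
    ∃ p ∈ P, (∀ q ∈ P, ∑ s, q s * v s ≤ ∑ s, p s * v s) ∧
      ∃ E : Finset (Fin n), E.card ≤ 1 ∧
        (∀ s ∉ E, p s = phat s + δ ∨ p s = phat s - δ ∨ (phat s ≤ δ ∧ p s = 0)) ∧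
        (∀ s ∈ E, phat s - δ < p s ∧ p s < phat s + δ) := by
  classical
  subst hP
  obtain ⟨hpos, hsum⟩ := hphat
  rcases Nat.eq_zero_or_pos n with hn | hn
  · subst hn; simp at hsum
  set l : Fin n → ℝ := fun s => max 0 (phat s - δ) with hldef
  set u : Fin n → ℝ := fun s => phat s + δ with hudef
  set g : ℕ → ℝ := fun m => ∑ s : Fin n, if (s : ℕ) < m then u s else l s with hgdef
  have huval : ∀ s, u s = phat s + δ := fun s => rfl
  have hlval : ∀ s, l s = max 0 (phat s - δ) := fun s => rfl
  have hlle : ∀ s, l s ≤ phat s := fun s => max_le (hpos s) (by linarith)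
  have hlge : ∀ s, phat s - δ ≤ l s := fun s => le_max_right _ _
  have hl0 : ∀ s, 0 ≤ l s := fun s => le_max_left _ _
  have hlu : ∀ s, l s ≤ u s := fun s =>
    max_le (by have := hpos s; rw [huval]; linarith) (by rw [huval]; linarith)
  have hg0 : g 0 ≤ 1 := by
    simp only [hgdef, Nat.not_lt_zero, if_false]
    rw [← hsum]
    exact Finset.sum_le_sum fun s _ => hlle s
  have hgn : 1 ≤ g n := by
    have hall : ∀ s : Fin n, (s : ℕ) < n := fun s => s.2
    simp only [hgdef, hall, if_true]
    rw [← hsum]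
    exact Finset.sum_le_sum fun s _ => by have := hpos s; rw [huval]; linarith
  have hstep : ∀ k : Fin n, g ((k : ℕ) + 1) = g (k : ℕ) + (u k - l k) := by
    intro k
    have hterm : ∀ s : Fin n,
        (if (s : ℕ) < (k : ℕ) + 1 then u s else l s) =
        (if (s : ℕ) < (k : ℕ) then u s else l s) + (if s = k then u k - l k else 0) := by
      intro s
      rcases lt_trichotomy (s : ℕ) (k : ℕ) with h | h | h
      · have hsk : s ≠ k := fun he => by simp [he] at h
        simp [h, Nat.lt_succ_of_lt h, hsk]
      · have hsk : s = k := Fin.ext h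
        simp [hsk, Nat.lt_succ_self]
      · have hsk : s ≠ k := fun he => by simp [he] at h
        have h1 : ¬ (s : ℕ) < (k : ℕ) := by omega
        have h2 : ¬ (s : ℕ) < (k : ℕ) + 1 := by omega
        simp [h1, h2, hsk]
    simp only [hgdef]
    rw [Finset.sum_congr rfl fun s _ => hterm s, Finset.sum_add_distrib]
    simp
  set K : ℕ := Nat.findGreatest (fun m => g m ≤ 1) (n - 1) with hKdef
  have hKle : K ≤ n - 1 := Nat.findGreatest_le _
  have hK : K < n := by omega
  have hgK : g K ≤ 1 := Nat.findGreatest_spec (P := fun m => g m ≤ 1) (Nat.zero_le _) hg0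
  have hgK1 : 1 ≤ g (K + 1) := by
    by_cases h : K + 1 ≤ n - 1
    · exact le_of_not_ge (Nat.findGreatest_is_greatest (P := fun m => g m ≤ 1) (Nat.lt_succ_self K) h)
    · have : K + 1 = n := by omega
      rw [this]; exact hgn
  set k : Fin n := ⟨K, hK⟩ with hkdef
  set c : ℝ := l k + (1 - g K) with hcdef
  have hcl : l k ≤ c := by simp only [hcdef]; linarith
  have hcu : c ≤ u k := by
    have := hstep k
    simp only [hkdef] at this
    simp only [hcdef]
    linarith
  set p : Fin n → ℝ := fun s => if s = k then c else if (s : ℕ) < K then u s else l s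
    with hpdef
  have hpk : p k = c := by simp [hpdef]
  have hpne : ∀ s, s ≠ k → p s = if (s : ℕ) < K then u s else l s := by
    intro s hs; simp [hpdef, hs]
  have hsum_p : ∑ s, p s = 1 := by
    have h1 : ∑ s, p s = p k + ∑ s ∈ Finset.univ.erase k, p s :=
      (Finset.add_sum_erase _ p (Finset.mem_univ k)).symm
    have hgKeq : g K = ∑ s : Fin n, if (s : ℕ) < K then u s else l s := rfl
    have h2 : g K = l k + ∑ s ∈ Finset.univ.erase k,
        (if (s : ℕ) < K then u s else l s) := by
      rw [hgKeq, ← Finset.add_sum_erase _ _ (Finset.mem_univ k)]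
      simp [hkdef]
    have h3 : ∑ s ∈ Finset.univ.erase k, p s =
        ∑ s ∈ Finset.univ.erase k, (if (s : ℕ) < K then u s else l s) :=
      Finset.sum_congr rfl fun s hs => hpne s (Finset.ne_of_mem_erase hs)
    rw [h1, h3, hpk]
    have h4 : ∑ s ∈ Finset.univ.erase k, (if (s : ℕ) < K then u s else l s)
        = g K - l k := by linarith
    rw [h4]
    simp only [hcdef]
    ring
  have hp0 : ∀ s, 0 ≤ p s := by
    intro s
    by_cases hs : s = k
    · rw [hs, hpk]; exact le_trans (hl0 k) hcl
    · rw [hpne s hs]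
      split
      · have := hpos s; rw [huval]; linarith
      · exact hl0 s
  have hpd : ∀ s, |p s - phat s| ≤ δ := by
    intro s
    rw [abs_le]
    by_cases hs : s = k
    · subst hs
      rw [hpk]
      constructor
      · have := hlge k; linarith
      · have h2 := hcu; rw [huval] at h2; linarith
    · rw [hpne s hs]
      split
      · rw [huval]; constructor <;> linarith
      · have h1 := hlge s; have h2 := hlle s
        constructor <;> linarith
  have hpmem : p ∈ {p | p ∈ stdSimplex ℝ (Fin n) ∧ ∀ s, |p s - phat s| ≤ δ} :=
    ⟨⟨hp0, hsum_p⟩, hpd⟩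
  refine ⟨p, hpmem, ?_, ?_⟩
  · rintro q ⟨⟨hq0, hq1⟩, hqd⟩
    have key : ∀ s, 0 ≤ (p s - q s) * (v s - v k) := by
      intro s
      rcases lt_trichotomy (s : ℕ) K with h | h | h
      · have hsk : s ≠ k := fun he => by simp [he, hkdef] at h
        have hpu : p s = u s := by rw [hpne s hsk, if_pos h]
        have hqu : q s ≤ u s := by
          have := (abs_le.mp (hqd s)).2; rw [huval]; linarith
        have hv : v k ≤ v s := hsorted s k (Fin.le_def.mpr (le_of_lt h))
        exact mul_nonneg (by linarith) (by linarith)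
      · have hsk : s = k := Fin.ext h
        simp [hsk]
      · have hsk : s ≠ k := fun he => by simp [he, hkdef] at h
        have h1 : ¬ (s : ℕ) < K := by omega
        have hpl : p s = l s := by rw [hpne s hsk, if_neg h1]
        have hql : l s ≤ q s := max_le (hq0 s)
          (by have := (abs_le.mp (hqd s)).1; linarith)
        have hv : v s ≤ v k := hsorted k s (Fin.le_def.mpr (le_of_lt h))
        have hring : (p s - q s) * (v s - v k) = (q s - p s) * (v k - v s) := by ring
        rw [hring]
        exact mul_nonneg (by linarith) (by linarith)
    have hsum0 : ∑ s, (p s - q s) = 0 := by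
      rw [Finset.sum_sub_distrib, hsum_p, hq1]; ring
    have hexp : ∑ s, (p s - q s) * (v s - v k) =
        (∑ s, p s * v s - ∑ s, q s * v s) - (∑ s, (p s - q s)) * v k := by
      rw [Finset.sum_mul, ← Finset.sum_sub_distrib, ← Finset.sum_sub_distrib]
      exact Finset.sum_congr rfl fun s _ => by ring
    have hknn : 0 ≤ ∑ s, (p s - q s) * (v s - v k) :=
      Finset.sum_nonneg fun s _ => key s
    rw [hexp, hsum0, zero_mul] at hknn
    linarith
  · have hcases : ∀ s, s ≠ k →
        (p s = phat s + δ ∨ p s = phat s - δ ∨ phat s ≤ δ ∧ p s = 0) := by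
      intro s hs
      rw [hpne s hs]
      split
      · left; exact huval _
      · rcases le_total (phat s - δ) 0 with h | h
        · right; right
          exact ⟨by linarith, max_eq_left h⟩
        · right; left
          exact max_eq_right h
    have hlcase : l k = phat k - δ ∨ (phat k ≤ δ ∧ l k = 0) := by
      rcases le_total (phat k - δ) 0 with h | h
      · right; exact ⟨by linarith, max_eq_left h⟩
      · left; exact max_eq_right h
    by_cases hE : l k < c ∧ c < u k
    · refine ⟨{k}, by simp, ?_, ?_⟩
      · intro s hs
        exact hcases s (by simpa using hs)
      · intro s hs
        have hsk : s = k := by simpa using hs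
        subst hsk
        rw [hpk]
        constructor
        · have := hlge k; linarith [hE.1]
        · have := hE.2; rw [huval] at this; linarith
    · refine ⟨∅, by simp, ?_, by simp⟩
      intro s _
      by_cases hs : s = k
      · subst hs
        rw [hpk]
        rcases lt_or_eq_of_le hcu with h | h
        · have hcl' : c ≤ l k := le_of_not_gt fun hlt => hE ⟨hlt, h⟩
          have hceq : c = l k := le_antisymm hcl' hcl
          rcases hlcase with h2 | h2
          · right; left; rw [hceq, h2]
          · right; right; exact ⟨h2.1, by rw [hceq, h2.2]⟩
        · left; rw [h, huval]
      · exact hcases s hs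
end
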